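/- There exist constants $c_1, c_2 > 0$ such that for all $a > 0$: $\frac{c_1}{a(1+a)} \leq \int_{-\pi}^{\pi} \min\left\{1, \left(\frac{|\sin\theta|}{a}\right)^2\right\} \frac{d\theta}{\sin^2\theta} \leq \frac{c_2}{a(1+a)}$. -/

import Mathlib

open Real MeasureTheory intervalIntegral

private lemma F_nonneg (a θ : ℝ) : 0 ≤ min 1 (Real.sin θ ^ 2 / a ^ 2) / Real.sin θ ^ 2 :=
  div_nonneg (le_min one_pos.le (by positivity)) (sq_nonneg _)

private lemma F_le_inv_a (a : ℝ) (ha : 0 < a) (θ : ℝ) :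
    min 1 (Real.sin θ ^ 2 / a ^ 2) / Real.sin θ ^ 2 ≤ 1 / a ^ 2 := by
  by_cases hs : Real.sin θ = 0
  · simp [hs]; positivity
  · have hs2 : (0:ℝ) < Real.sin θ ^ 2 := by positivity
    calc min 1 (Real.sin θ ^ 2 / a ^ 2) / Real.sin θ ^ 2
        ≤ (Real.sin θ ^ 2 / a ^ 2) / Real.sin θ ^ 2 := by gcongr; exact min_le_right _ _
      _ = 1 / a ^ 2 := by field_simp

private lemma F_le_inv_sin (a θ : ℝ) :
    min 1 (Real.sin θ ^ 2 / a ^ 2) / Real.sin θ ^ 2 ≤ 1 / Real.sin θ ^ 2 := by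
  by_cases hs : Real.sin θ = 0
  · simp [hs]
  · have hs2 : (0:ℝ) < Real.sin θ ^ 2 := by positivity
    gcongr
    exact min_le_left _ _

private lemma F_intble (a : ℝ) (ha : 0 < a) (b c : ℝ) :
    IntervalIntegrable (fun θ => min 1 (Real.sin θ ^ 2 / a ^ 2) / Real.sin θ ^ 2) volume b c := by
  apply IntervalIntegrable.mono_fun (_root_.intervalIntegrable_const (c := 1/a^2))
  · apply Measurable.aestronglyMeasurable
    fun_prop
  · filter_upwards with θ
    simp only [norm_eq_abs]
    rw [abs_of_nonneg (F_nonneg a θ), abs_of_nonneg (by positivity : (0:ℝ) ≤ 1/a^2)]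
    exact F_le_inv_a a ha θ

theorem stmt12 : ∃ c₁ c₂ : ℝ, 0 < c₁ ∧ 0 < c₂ ∧ ∀ a : ℝ, 0 < a →
    c₁ / (a * (1 + a)) ≤
        (∫ θ in (-Real.pi)..Real.pi, min 1 (Real.sin θ ^ 2 / a ^ 2) / Real.sin θ ^ 2) ∧
      (∫ θ in (-Real.pi)..Real.pi, min 1 (Real.sin θ ^ 2 / a ^ 2) / Real.sin θ ^ 2) ≤
        c₂ / (a * (1 + a)) := by
  have hpi : (0:ℝ) < π := Real.pi_pos
  have hpi3 : (3:ℝ) < π := Real.pi_gt_three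
  have hpi4 : π < 4 := Real.pi_lt_d2.trans (by norm_num)
  refine ⟨1, 8 + 2 * π ^ 2, one_pos, by positivity, fun a ha => ?_⟩
  set F : ℝ → ℝ := fun θ => min 1 (Real.sin θ ^ 2 / a ^ 2) / Real.sin θ ^ 2 with hF
  have hInt : ∀ b c : ℝ, IntervalIntegrable F volume b c := F_intble a ha
  have hnn : ∀ θ, 0 ≤ F θ := F_nonneg a
  have hle : ∀ θ, F θ ≤ 1 / a ^ 2 := F_le_inv_a a ha
  constructor
  · -- lower bound
    set m : ℝ := min a 1 with hm
    have hm0 : 0 < m := lt_min ha one_pos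
    have hmpi : m ≤ π := (min_le_right a 1).trans (by linarith)
    have hsplit1 : (∫ θ in (-π)..(0:ℝ), F θ) + ∫ θ in (0:ℝ)..π, F θ = ∫ θ in (-π)..π, F θ :=
      integral_add_adjacent_intervals (hInt _ _) (hInt _ _)
    have hsplit2 : (∫ θ in (0:ℝ)..m, F θ) + ∫ θ in m..π, F θ = ∫ θ in (0:ℝ)..π, F θ :=
      integral_add_adjacent_intervals (hInt _ _) (hInt _ _)
    have h1 : (0:ℝ) ≤ ∫ θ in (-π)..(0:ℝ), F θ :=
      integral_nonneg (by linarith) (fun x _ => hnn x)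
    have h2 : (0:ℝ) ≤ ∫ θ in m..π, F θ :=
      integral_nonneg hmpi (fun x _ => hnn x)
    have hval : (∫ θ in (0:ℝ)..m, F θ) = m * (1 / a ^ 2) := by
      have : (∫ θ in (0:ℝ)..m, F θ) = ∫ θ in (0:ℝ)..m, (1 / a ^ 2) := by
        rw [integral_of_le hm0.le, integral_of_le hm0.le]
        refine setIntegral_congr_fun measurableSet_Ioc (fun θ hθ => ?_)
        have hθ0 : 0 < θ := hθ.1
        have hθm : θ ≤ m := hθ.2
        have hθ1 : θ ≤ 1 := hθm.trans (min_le_right a 1)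
        have hθa : θ ≤ a := hθm.trans (min_le_left a 1)
        have hsθ : Real.sin θ < θ := Real.sin_lt hθ0
        have hspos : 0 < Real.sin θ := Real.sin_pos_of_pos_of_lt_pi hθ0 (by linarith)
        have hsin2 : Real.sin θ ^ 2 ≤ a ^ 2 := by nlinarith
        have hmin : min 1 (Real.sin θ ^ 2 / a ^ 2) = Real.sin θ ^ 2 / a ^ 2 := by
          rw [min_eq_right]
          rw [div_le_one (by positivity)]
          exact hsin2
        simp only [hF, hmin]
        field_simp
      rw [this]
      rw [intervalIntegral.integral_const, smul_eq_mul, sub_zero]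
    have hfin : 1 / (a * (1 + a)) ≤ m * (1 / a ^ 2) := by
      rw [div_le_iff₀ (by positivity)]
      rcases le_total a 1 with h | h
      · rw [hm, min_eq_left h]
        have heq : a * (1 / a ^ 2) * (a * (1 + a)) = 1 + a := by field_simp
        rw [heq]; linarith
      · rw [hm, min_eq_right h]
        have heq : (1:ℝ) * (1 / a ^ 2) * (a * (1 + a)) = (a * (1 + a)) / a ^ 2 := by ring
        rw [heq, le_div_iff₀ (by positivity)]; nlinarith
    calc (1:ℝ) / (a * (1 + a)) ≤ m * (1 / a ^ 2) := hfin
      _ = ∫ θ in (0:ℝ)..m, F θ := hval.symm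
      _ ≤ (∫ θ in (0:ℝ)..m, F θ) + ∫ θ in m..π, F θ := by linarith
      _ = ∫ θ in (0:ℝ)..π, F θ := hsplit2
      _ ≤ (∫ θ in (-π)..(0:ℝ), F θ) + ∫ θ in (0:ℝ)..π, F θ := by linarith
      _ = ∫ θ in (-π)..π, F θ := hsplit1
  · -- upper bound
    rcases le_or_gt 1 a with hage | halt
    · -- a ≥ 1
      have hmono : (∫ θ in (-π)..π, F θ) ≤ ∫ θ in (-π)..π, (1 / a ^ 2) := by
        apply integral_mono_on (by linarith) (hInt _ _) (_root_.intervalIntegrable_const)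
        exact fun x _ => hle x
      have hconst : (∫ θ in (-π)..π, (1 / a ^ 2 : ℝ)) = 2 * π * (1 / a ^ 2) := by
        rw [intervalIntegral.integral_const, smul_eq_mul]; ring
      have hfin : 2 * π * (1 / a ^ 2) ≤ (8 + 2 * π ^ 2) / (a * (1 + a)) := by
        rw [mul_one_div, div_le_div_iff₀ (by positivity) (by positivity)]
        have f1 : π * a ≤ 4 * a := by nlinarith
        have f2 : 4 * a ≤ 4 * a ^ 2 := by nlinarith
        have fp : π ≤ π ^ 2 := by nlinarith
        have f3 : π * a ^ 2 ≤ π ^ 2 * a ^ 2 := mul_le_mul_of_nonneg_right fp (sq_nonneg a)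
        nlinarith [f1, f2, f3]
      rw [hconst] at hmono
      linarith
    · -- a < 1
      have heven : ∀ θ, F (-θ) = F θ := by
        intro θ
        have hs : Real.sin (-θ) ^ 2 = Real.sin θ ^ 2 := by rw [Real.sin_neg]; ring
        simp only [hF, hs]
      have hpisub : ∀ θ, F (π - θ) = F θ := by
        intro θ; simp only [hF, Real.sin_pi_sub]
      have h1 : (∫ θ in (-π)..(0:ℝ), F θ) = ∫ θ in (0:ℝ)..π, F θ := by
        have := integral_comp_neg (a := 0) (b := π) F
        simp only [heven, neg_zero] at this
        exact this.symm
      have h2 : (∫ θ in (π/2)..π, F θ) = ∫ θ in (0:ℝ)..(π/2), F θ := by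
        have := integral_comp_sub_left (a := 0) (b := π/2) F π
        rw [sub_half, sub_zero] at this
        simp only [hpisub] at this
        exact this.symm
      have hsplit1 : (∫ θ in (-π)..(0:ℝ), F θ) + ∫ θ in (0:ℝ)..π, F θ = ∫ θ in (-π)..π, F θ :=
        integral_add_adjacent_intervals (hInt _ _) (hInt _ _)
      have hsplit2 : (∫ θ in (0:ℝ)..(π/2), F θ) + ∫ θ in (π/2)..π, F θ = ∫ θ in (0:ℝ)..π, F θ :=
        integral_add_adjacent_intervals (hInt _ _) (hInt _ _)
      have hItot : (∫ θ in (-π)..π, F θ) = 4 * ∫ θ in (0:ℝ)..(π/2), F θ := by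
        rw [← hsplit1, h1, ← hsplit2, h2]; ring
      have hapi : a < π / 2 := by linarith
      have hsplit3 : (∫ θ in (0:ℝ)..a, F θ) + ∫ θ in a..(π/2), F θ = ∫ θ in (0:ℝ)..(π/2), F θ :=
        integral_add_adjacent_intervals (hInt _ _) (hInt _ _)
      -- piece 1
      have hp1 : (∫ θ in (0:ℝ)..a, F θ) ≤ 1 / a := by
        have : (∫ θ in (0:ℝ)..a, F θ) ≤ ∫ θ in (0:ℝ)..a, (1 / a ^ 2) := by
          apply integral_mono_on ha.le (hInt _ _) (_root_.intervalIntegrable_const)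
          exact fun x _ => hle x
        rw [intervalIntegral.integral_const] at this
        calc (∫ θ in (0:ℝ)..a, F θ) ≤ (a - 0) • (1 / a ^ 2) := this
          _ = 1 / a := by rw [smul_eq_mul, sub_zero]; field_simp
      -- piece 2
      have hcont : ContinuousOn (fun θ : ℝ => π ^ 2 / 4 * θ ^ (-2 : ℤ)) (Set.uIcc a (π/2)) := by
        apply ContinuousOn.mul continuousOn_const
        apply ContinuousOn.zpow₀ continuousOn_id
        intro x hx
        left
        rw [Set.uIcc_of_le hapi.le] at hx
        exact ne_of_gt (lt_of_lt_of_le ha hx.1)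
      have hp2 : (∫ θ in a..(π/2), F θ) ≤ π ^ 2 / 4 * (1 / a) := by
        have hmono : (∫ θ in a..(π/2), F θ) ≤ ∫ θ in a..(π/2), π ^ 2 / 4 * θ ^ (-2 : ℤ) := by
          apply integral_mono_on hapi.le (hInt _ _) (hcont.intervalIntegrable)
          intro θ hθ
          have hθa : a ≤ θ := hθ.1
          have hθpi : θ ≤ π / 2 := hθ.2
          have hθ0 : 0 < θ := lt_of_lt_of_le ha hθa
          have hsin : 2 / π * θ ≤ Real.sin θ := Real.mul_le_sin hθ0.le hθpi
          have hsin0 : 0 < Real.sin θ := lt_of_lt_of_le (by positivity) hsin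
          calc F θ ≤ 1 / Real.sin θ ^ 2 := F_le_inv_sin a θ
            _ ≤ 1 / (2 / π * θ) ^ 2 := by gcongr
            _ = π ^ 2 / 4 * θ ^ (-2 : ℤ) := by
                rw [zpow_neg, zpow_two]
                field_simp
                ring
        have hcalc : (∫ θ in a..(π/2), π ^ 2 / 4 * θ ^ (-2 : ℤ))
            = π ^ 2 / 4 * (((π/2) ^ (-1 : ℤ) - a ^ (-1 : ℤ)) / (-1 : ℤ)) := by
          rw [intervalIntegral.integral_const_mul, integral_zpow]
          · norm_num
          · right
            constructor
            · norm_num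
            · rw [Set.uIcc_of_le hapi.le]
              intro h
              exact absurd h.1 (by linarith)
        rw [hcalc] at hmono
        refine hmono.trans ?_
        have : ((π/2) ^ (-1 : ℤ) - a ^ (-1 : ℤ)) / ((-1 : ℤ) : ℝ) = 1 / a - 2 / π := by
          simp only [zpow_neg, zpow_one, Int.cast_neg, Int.cast_one]
          field_simp
          ring
        rw [this]
        have : 1 / a - 2 / π ≤ 1 / a := by
          have : 0 < 2 / π := by positivity
          linarith
        nlinarith [sq_nonneg π]
      -- combine
      have hJ : (∫ θ in (0:ℝ)..(π/2), F θ) ≤ (1 + π ^ 2 / 4) / a := by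
        rw [← hsplit3]
        have : (1 + π ^ 2 / 4) / a = 1 / a + π ^ 2 / 4 * (1 / a) := by field_simp
        rw [this]
        exact add_le_add hp1 hp2
      rw [hItot]
      calc 4 * (∫ θ in (0:ℝ)..(π/2), F θ) ≤ 4 * ((1 + π ^ 2 / 4) / a) := by linarith
        _ = (4 + π ^ 2) / a := by field_simp
        _ ≤ (8 + 2 * π ^ 2) / (a * (1 + a)) := by
            rw [div_le_div_iff₀ (by positivity) (by positivity)]
            nlinarith [mul_nonneg (mul_nonneg (by positivity : (0:ℝ) ≤ 4 + π ^ 2) ha.le)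
              (by linarith : (0:ℝ) ≤ 1 - a)]
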